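/- The average difference Δ(s,c) = (μλ/(μ+λ)) · (θc + (1-θ)s)/(μc + λs + cs) satisfies 0 ≤ Δ(s,c) ≤ max(θλ/(μ+λ), (1-θ)μ/(μ+λ)) for all s, c ≥ 0 with (s,c) ≠ (0,0). -/
import Mathlib


theorem stmt_14 (lam mu theta : ℝ) (hlam : 0 < lam) (hmu : 0 < mu)
    (htheta0 : 0 ≤ theta) (htheta1 : theta ≤ 1) :
    ∀ s c : ℝ, 0 ≤ s → 0 ≤ c → (s, c) ≠ (0, 0) →
      0 ≤ (mu * lam / (mu + lam)) * ((theta * c + (1 - theta) * s) / (mu * c + lam * s + c * s)) ∧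
      (mu * lam / (mu + lam)) * ((theta * c + (1 - theta) * s) / (mu * c + lam * s + c * s)) ≤
        max (theta * lam / (mu + lam)) ((1 - theta) * mu / (mu + lam)) := by
  intro s c hs hc hne
  have hsum : 0 < mu + lam := by linarith
  have hD : 0 < mu * c + lam * s + c * s := by
    rcases hs.eq_or_lt with h1 | h1
    · rcases hc.eq_or_lt with h2 | h2
      · exact absurd (by rw [← h1, ← h2]) hne
      · nlinarith
    · nlinarith
  have hN : 0 ≤ theta * c + (1 - theta) * s := by nlinarith
  constructor
  · apply mul_nonneg (div_nonneg (by positivity) hsum.le) (div_nonneg hN hD.le)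
  · have heq : (mu * lam / (mu + lam)) * ((theta * c + (1 - theta) * s) / (mu * c + lam * s + c * s))
        = (mu * lam * (theta * c + (1 - theta) * s)) / ((mu + lam) * (mu * c + lam * s + c * s)) := by
      field_simp
    rw [heq]
    rcases le_total (theta * lam) ((1 - theta) * mu) with h | h
    · refine le_trans ?_ (le_max_right _ _)
      rw [div_le_div_iff₀ (by positivity) hsum]
      nlinarith [mul_le_mul_of_nonneg_right h (by positivity : (0:ℝ) ≤ mu * c * (mu + lam)),
        mul_nonneg (mul_nonneg (mul_nonneg (mul_nonneg (sub_nonneg.2 htheta1) hmu.le) hc) hs) hsum.le]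
    · refine le_trans ?_ (le_max_left _ _)
      rw [div_le_div_iff₀ (by positivity) hsum]
      nlinarith [mul_le_mul_of_nonneg_right h (by positivity : (0:ℝ) ≤ lam * s * (mu + lam)),
        mul_nonneg (mul_nonneg (mul_nonneg (mul_nonneg htheta0 hlam.le) hc) hs) hsum.le]
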